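/- In the field ℂ(κ) of rational functions, define for integers a,b,c ≥ 0: A_{a,b,c} = ((a+2b+3c+2κ−3)^{(c)} / (κ−2)^{(c)}) · (b+2c+κ−1)^{(a+b+c)}, where (x)^{(r)} = x(x+1)⋯(x+r−1) is the ascending Pochhammer symbol. Then these elements satisfy, for all a,b,c ≥ 0: (i) (κ+b+2c−1)·A_{a,b+1,c} = A_{a+2,b,c}; (ii) (κ+c−2)·A_{a,b,c+1} = 2·A_{a+1,b+1,c} + a·A_{a−1,b+2,c} (where the last term is 0 when a = 0); (iii) A_{a,0,0} = (κ−1)^{(a)}; and moreover (b+2c+κ−1)^{(a+b+c)} = (2b+3c+κ−1)^{(a)}·(b+3c+κ−1)^{(b)}·(b+2c+κ−1)^{(c)}. (These recursions express that the power series G^{(3)} = Σ_{a,b,c} A_{a,b,c}·s₁^a s₂^b s₃^c/(a!b!c!) is annihilated by 𝓛₂ = (κ−1)∂₂ + s₂∂₂² + 2s₃∂₂∂₃ − ∂₁² and 𝓛₃ = (κ−2)∂₃ + s₃∂₃² − 2∂₁∂₂ − s₁∂₂².) -/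
import Mathlib


/-- The ascending Pochhammer symbol `(x)^{(r)} = x(x+1)⋯(x+r−1)` in `ℂ(κ)`. -/
noncomputable def asc (x : RatFunc ℂ) (r : ℕ) : RatFunc ℂ :=
  (ascPochhammer (RatFunc ℂ) r).eval x

/-- The indeterminate `κ` of `ℂ(κ)`. -/
noncomputable def kappa : RatFunc ℂ := RatFunc.X

/-- `A_{a,b,c} = ((a+2b+3c+2κ−3)^{(c)} / (κ−2)^{(c)}) · (b+2c+κ−1)^{(a+b+c)}`. -/
noncomputable def Aabc (a b c : ℕ) : RatFunc ℂ :=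
  asc ((a : RatFunc ℂ) + 2 * b + 3 * c + 2 * kappa - 3) c / asc (kappa - 2) c *
    asc ((b : RatFunc ℂ) + 2 * c + kappa - 1) (a + b + c)

/-- the elements `A_{a,b,c}` of `ℂ(κ)` satisfy
(i) `(κ+b+2c−1)·A_{a,b+1,c} = A_{a+2,b,c}`;
(ii) `(κ+c−2)·A_{a,b,c+1} = 2·A_{a+1,b+1,c} + a·A_{a−1,b+2,c}` (last term `0` if `a = 0`);
(iii) `A_{a,0,0} = (κ−1)^{(a)}`; and
(iv) `(b+2c+κ−1)^{(a+b+c)} = (2b+3c+κ−1)^{(a)}·(b+3c+κ−1)^{(b)}·(b+2c+κ−1)^{(c)}`. -/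

lemma asc_zero' (x : RatFunc ℂ) : asc x 0 = 1 := by simp [asc]

lemma asc_succ_right' (x : RatFunc ℂ) (r : ℕ) : asc x (r+1) = asc x r * (x + r) := by
  simp [asc, ascPochhammer_succ_right]

lemma asc_succ_left' (x : RatFunc ℂ) (r : ℕ) : asc x (r+1) = x * asc (x+1) r := by
  simp [asc, ascPochhammer_succ_left, Polynomial.eval_comp]

lemma asc_add' (x : RatFunc ℂ) (m n : ℕ) : asc x (m+n) = asc x m * asc (x + m) n := by
  have h := congrArg (Polynomial.eval x) (ascPochhammer_mul (RatFunc ℂ) m n)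
  simpa [asc, Polynomial.eval_comp] using h.symm

lemma hd' (c : ℕ) : kappa - 2 + (c : RatFunc ℂ) ≠ 0 := by
  have h : kappa - 2 + (c : RatFunc ℂ) =
      algebraMap (Polynomial ℂ) (RatFunc ℂ) (Polynomial.X - 2 + (c : Polynomial ℂ)) := by
    simp [kappa, RatFunc.algebraMap_X, map_ofNat]
  rw [h]
  apply RatFunc.algebraMap_ne_zero
  intro hq
  have h2 := congrArg (fun p => Polynomial.coeff p 1) hq
  simp [Polynomial.coeff_ofNat_succ] at h2


theorem stmt15 (a b c : ℕ) :
    (kappa + b + 2 * c - 1) * Aabc a (b + 1) c = Aabc (a + 2) b c ∧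
    (kappa + c - 2) * Aabc a b (c + 1) =
      2 * Aabc (a + 1) (b + 1) c + (a : RatFunc ℂ) * Aabc (a - 1) (b + 2) c ∧
    Aabc a 0 0 = asc (kappa - 1) a ∧
    asc ((b : RatFunc ℂ) + 2 * c + kappa - 1) (a + b + c) =
      asc (2 * (b : RatFunc ℂ) + 3 * c + kappa - 1) a *
        asc ((b : RatFunc ℂ) + 3 * c + kappa - 1) b *
        asc ((b : RatFunc ℂ) + 2 * c + kappa - 1) c := by
  refine ⟨?_, ?_, ?_, ?_⟩
  · simp only [Aabc]
    rw [show a + (b+1) + c = (a+b+c)+1 from by omega,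
        show (a+2) + b + c = ((a+b+c)+1)+1 from by omega,
        asc_succ_left' ((b:RatFunc ℂ) + 2*c + kappa - 1) ((a+b+c)+1)]
    push_cast
    ring_nf
  · have c1 : ∀ a : ℕ, Aabc a b (c+1) =
        asc ((a:RatFunc ℂ)+2*b+3*c+2*kappa) c * ((a:RatFunc ℂ)+2*b+4*c+2*kappa)
          / (asc (kappa-2) c * (kappa - 2 + c))
          * asc ((b:RatFunc ℂ)+2*c+kappa+1) (a+b+c+1) := by
      intro a
      simp only [Aabc]
      rw [show a + b + (c+1) = (a+b+c)+1 from by omega,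
          asc_succ_right' (kappa - 2) c,
          asc_succ_right' ((a:RatFunc ℂ) + 2*(b:RatFunc ℂ) + 3*((c+1:ℕ):RatFunc ℂ) + 2*kappa - 3) c]
      push_cast
      ring_nf
    have c2 : ∀ a : ℕ, Aabc (a+1) (b+1) c =
        asc ((a:RatFunc ℂ)+2*b+3*c+2*kappa) c / asc (kappa-2) c
          * (((b:RatFunc ℂ)+2*c+kappa) * asc ((b:RatFunc ℂ)+2*c+kappa+1) (a+b+c+1)) := by
      intro a
      simp only [Aabc]
      rw [show (a+1) + (b+1) + c = ((a+b+c)+1)+1 from by omega,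
          asc_succ_left' (((b+1:ℕ):RatFunc ℂ) + 2*(c:RatFunc ℂ) + kappa - 1) ((a+b+c)+1)]
      push_cast
      ring_nf
    rcases a with _ | a
    · rw [c1 0, c2 0]
      push_cast
      simp only [div_eq_mul_inv, mul_inv]
      linear_combination (norm := ring_nf) ((2*((b:RatFunc ℂ)+2*c+kappa))
        * asc (2*(b:RatFunc ℂ)+3*c+2*kappa) c * (asc (kappa-2) c)⁻¹
        * asc ((b:RatFunc ℂ)+2*c+kappa+1) (0+b+c+1)) * (mul_inv_cancel₀ (hd' c))
    · have c3 : Aabc a (b+2) c =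
          asc (((a+1:ℕ):RatFunc ℂ)+2*b+3*c+2*kappa) c / asc (kappa-2) c
            * asc ((b:RatFunc ℂ)+2*c+kappa+1) ((a+1)+b+c+1) := by
        simp only [Aabc]
        rw [show a + (b+2) + c = ((a+1)+b+c)+1 from by omega]
        push_cast
        ring_nf
      rw [c1 (a+1), c2 (a+1), show (a+1) - 1 = a from by omega, c3]
      push_cast
      simp only [div_eq_mul_inv, mul_inv]
      linear_combination (norm := ring_nf) ((2*((b:RatFunc ℂ)+2*c+kappa)+(a:RatFunc ℂ)+1)
        * asc ((a:RatFunc ℂ)+1+2*(b:RatFunc ℂ)+3*c+2*kappa) c * (asc (kappa-2) c)⁻¹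
        * asc ((b:RatFunc ℂ)+2*c+kappa+1) ((a+1)+b+c+1)) * (mul_inv_cancel₀ (hd' c))
  · simp [Aabc, asc_zero']
  · rw [show a + b + c = c + (b + a) from by omega, asc_add', asc_add']
    ring_nf
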